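/- Let f: ℝ^d → ℝ be twice continuously differentiable with l-Lipschitz gradient and γ-Lipschitz Hessian in spectral norm. Let x* satisfy ∇f(x*) = 0, β > 0, ∇²f(x*) + βI invertible, K* = (∇²f(x*) + βI)⁻¹, η = ‖K*‖, μ > 1. Suppose x(1) = x(0) − K(0)∇f(x(0)) and the initial condition (ηγ/2)‖x(0) − x*‖ + l‖K(0) − K*‖ + ηβ ≤ 1/(2μ) holds. Then ‖x(1) − x*‖ ≤ (1/(2μ))‖x(0) − x*‖. -/

import Mathlib

/-- The spectral norm (matrix norm induced by the Euclidean 2-norm) of a real matrix. -/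
noncomputable def sNorm {d : ℕ} (M : Matrix (Fin d) (Fin d) ℝ) : ℝ :=
  ‖(Matrix.toEuclideanCLM (𝕜 := ℝ) M : EuclideanSpace ℝ (Fin d) →L[ℝ] EuclideanSpace ℝ (Fin d))‖

/-- The action of a real matrix on a Euclidean vector. -/
noncomputable def mApply {d : ℕ} (M : Matrix (Fin d) (Fin d) ℝ)
    (v : EuclideanSpace ℝ (Fin d)) : EuclideanSpace ℝ (Fin d) :=
  Matrix.toEuclideanCLM (𝕜 := ℝ) M v

/-- The largest eigenvalue of a (symmetric) real matrix, as the supremum of its real spectrum. -/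
noncomputable def lamMax {d : ℕ} (M : Matrix (Fin d) (Fin d) ℝ) : ℝ := sSup (spectrum ℝ M)

/-- The smallest eigenvalue of a (symmetric) real matrix, as the infimum of its real spectrum. -/
noncomputable def lamMin {d : ℕ} (M : Matrix (Fin d) (Fin d) ℝ) : ℝ := sInf (spectrum ℝ M)

-- Taylor lemma
lemma taylor_aux {d : ℕ} (g : EuclideanSpace ℝ (Fin d) → EuclideanSpace ℝ (Fin d))
    (Hf : EuclideanSpace ℝ (Fin d) → Matrix (Fin d) (Fin d) ℝ)
    (hHf : ∀ x, HasFDerivAt g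
      (Matrix.toEuclideanCLM (𝕜 := ℝ) (Hf x) :
        EuclideanSpace ℝ (Fin d) →L[ℝ] EuclideanSpace ℝ (Fin d)) x)
    (γ : ℝ) (hhessLip : ∀ x y, sNorm (Hf x - Hf y) ≤ γ * ‖x - y‖)
    (a b : EuclideanSpace ℝ (Fin d)) :
    ‖g b - g a - mApply (Hf a) (b - a)‖ ≤ γ / 2 * ‖b - a‖ ^ 2 := by
  set v := b - a with hv
  set T : Matrix (Fin d) (Fin d) ℝ → (EuclideanSpace ℝ (Fin d) →L[ℝ] EuclideanSpace ℝ (Fin d)) :=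
    fun M => Matrix.toEuclideanCLM (𝕜 := ℝ) M with hT
  -- the curve
  have hline : ∀ t : ℝ, HasDerivAt (fun t : ℝ => a + t • v) v t := by
    intro t
    simpa using ((hasDerivAt_id t).smul_const v).const_add a
  have hderiv : ∀ t : ℝ, HasDerivAt (fun t => g (a + t • v)) (T (Hf (a + t • v)) v) t := by
    intro t
    exact (hHf (a + t • v)).comp_hasDerivAt t (hline t)
  -- continuity of the derivative
  have hcont : Continuous fun t : ℝ => T (Hf (a + t • v)) v := by
    apply (LipschitzWith.of_dist_le_mul (K := (γ * ‖v‖ * ‖v‖).toNNReal)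
      (f := fun t : ℝ => T (Hf (a + t • v)) v) ?_).continuous
    intro s t
    have h1 : dist (T (Hf (a + s • v)) v) (T (Hf (a + t • v)) v)
        ≤ sNorm (Hf (a + s • v) - Hf (a + t • v)) * ‖v‖ := by
      rw [dist_eq_norm]
      have : T (Hf (a + s • v)) v - T (Hf (a + t • v)) v
          = T (Hf (a + s • v) - Hf (a + t • v)) v := by
        simp [hT, map_sub]
      rw [this]
      exact (T _).le_opNorm v
    have h2 : sNorm (Hf (a + s • v) - Hf (a + t • v)) ≤ γ * (dist s t * ‖v‖) := by
      have := hhessLip (a + s • v) (a + t • v)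
      have he : ‖(a + s • v) - (a + t • v)‖ = dist s t * ‖v‖ := by
        have : (a + s • v) - (a + t • v) = (s - t) • v := by
          module
        rw [this, norm_smul, Real.norm_eq_abs, Real.dist_eq]
      rwa [he] at this
    calc dist (T (Hf (a + s • v)) v) (T (Hf (a + t • v)) v)
        ≤ (γ * (dist s t * ‖v‖)) * ‖v‖ := h1.trans (by
          apply mul_le_mul_of_nonneg_right h2 (norm_nonneg v))
      _ = (γ * ‖v‖ * ‖v‖) * dist s t := by ring
      _ ≤ ((γ * ‖v‖ * ‖v‖).toNNReal : ℝ) * dist s t := by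
          apply mul_le_mul_of_nonneg_right (Real.le_coe_toNNReal _) dist_nonneg
  have hint : IntervalIntegrable (fun t : ℝ => T (Hf (a + t • v)) v)
      MeasureTheory.volume 0 1 := hcont.intervalIntegrable 0 1
  have hFTC : ∫ t in (0:ℝ)..1, T (Hf (a + t • v)) v = g b - g a := by
    have := intervalIntegral.integral_eq_sub_of_hasDerivAt
      (f := fun t => g (a + t • v)) (f' := fun t => T (Hf (a + t • v)) v)
      (fun t _ => hderiv t) hint
    simpa [hv] using this
  have hconst : ∫ t in (0:ℝ)..1, T (Hf a) v = mApply (Hf a) v := by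
    simp [mApply, hT]
  have key : g b - g a - mApply (Hf a) v
      = ∫ t in (0:ℝ)..1, (T (Hf (a + t • v)) v - T (Hf a) v) := by
    rw [intervalIntegral.integral_sub hint (intervalIntegrable_const), hFTC, hconst]
  rw [key]
  have hbound : ∀ t ∈ Set.Icc (0:ℝ) 1,
      ‖T (Hf (a + t • v)) v - T (Hf a) v‖ ≤ γ * ‖v‖ ^ 2 * t := by
    intro t ht
    have hsub : T (Hf (a + t • v)) v - T (Hf a) v = T (Hf (a + t • v) - Hf a) v := by
      simp [hT, map_sub]
    rw [hsub]
    calc ‖T (Hf (a + t • v) - Hf a) v‖ ≤ sNorm (Hf (a + t • v) - Hf a) * ‖v‖ :=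
          (T _).le_opNorm v
      _ ≤ (γ * ‖(a + t • v) - a‖) * ‖v‖ :=
          mul_le_mul_of_nonneg_right (hhessLip _ _) (norm_nonneg v)
      _ = γ * ‖v‖ ^ 2 * t := by
          have : (a + t • v) - a = t • v := by module
          rw [this, norm_smul, Real.norm_eq_abs, abs_of_nonneg ht.1]
          ring
  have hnn : 0 ≤ γ * ‖v‖ ^ 2 :=
    le_trans (norm_nonneg _) (by simpa using hbound 1 ⟨zero_le_one, le_rfl⟩)
  have hintval : ∫ t in (0:ℝ)..1, γ * ‖v‖ ^ 2 * t = γ / 2 * ‖v‖ ^ 2 := by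
    rw [intervalIntegral.integral_const_mul, integral_id]
    ring
  calc ‖∫ t in (0:ℝ)..1, (T (Hf (a + t • v)) v - T (Hf a) v)‖
      ≤ |∫ t in (0:ℝ)..1, γ * ‖v‖ ^ 2 * t| := by
        apply intervalIntegral.norm_integral_le_abs_of_norm_le
        · filter_upwards [MeasureTheory.ae_restrict_mem measurableSet_uIoc] with t ht
          have ht' : t ∈ Set.Icc (0:ℝ) 1 := by
            rcases Set.uIoc_of_le (by norm_num : (0:ℝ) ≤ 1) ▸ ht with ⟨h1, h2⟩
            exact ⟨le_of_lt h1, h2⟩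
          exact hbound t ht'
        · exact (continuous_const.mul continuous_id).intervalIntegrable 0 1
    _ = γ / 2 * ‖v‖ ^ 2 := by
        rw [hintval, abs_of_nonneg]
        nlinarith

/-- Base case of the induction in Theorem 1: under the initial condition
`(ηγ/2)‖x(0) - x*‖ + l‖K(0) - K*‖ + ηβ ≤ 1/(2μ)`, the first IPG step satisfies
`‖x(1) - x*‖ ≤ (1/(2μ))‖x(0) - x*‖`. -/
theorem ipg_base_case {d : ℕ}
    (f : EuclideanSpace ℝ (Fin d) → ℝ)
    (Hf : EuclideanSpace ℝ (Fin d) → Matrix (Fin d) (Fin d) ℝ)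
    (hf : ContDiff ℝ 2 f)
    (hHf : ∀ x, HasFDerivAt (gradient f)
      (Matrix.toEuclideanCLM (𝕜 := ℝ) (Hf x) :
        EuclideanSpace ℝ (Fin d) →L[ℝ] EuclideanSpace ℝ (Fin d)) x)
    (l γ : ℝ)
    (hgradLip : ∀ x y, ‖gradient f x - gradient f y‖ ≤ l * ‖x - y‖)
    (hhessLip : ∀ x y, sNorm (Hf x - Hf y) ≤ γ * ‖x - y‖)
    (xstar : EuclideanSpace ℝ (Fin d)) (hcrit : gradient f xstar = 0)
    (β : ℝ) (hβ : 0 < β) (hinv : IsUnit (Hf xstar + β • 1))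
    (Kstar : Matrix (Fin d) (Fin d) ℝ) (hKstar : Kstar = (Hf xstar + β • 1)⁻¹)
    (η : ℝ) (hη : η = sNorm Kstar) (μ : ℝ) (hμ : 1 < μ)
    (x0 x1 : EuclideanSpace ℝ (Fin d)) (K0 : Matrix (Fin d) (Fin d) ℝ)
    (hup : x1 = x0 - mApply K0 (gradient f x0))
    (hinit : η * γ / 2 * ‖x0 - xstar‖ + l * sNorm (K0 - Kstar) + η * β ≤ 1 / (2 * μ)) :
    ‖x1 - xstar‖ ≤ 1 / (2 * μ) * ‖x0 - xstar‖ := by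
  set T : Matrix (Fin d) (Fin d) ℝ → (EuclideanSpace ℝ (Fin d) →L[ℝ] EuclideanSpace ℝ (Fin d)) :=
    fun M => Matrix.toEuclideanCLM (𝕜 := ℝ) M with hT
  set v := x0 - xstar with hv
  set g := gradient f x0 with hg
  set M : Matrix (Fin d) (Fin d) ℝ := Hf xstar + β • 1 with hM
  -- K* M = 1
  have hKM : Kstar * M = 1 := by
    rw [hKstar]
    exact Matrix.nonsing_inv_mul M ((Matrix.isUnit_iff_isUnit_det M).mp hinv)
  have hid : ∀ w : EuclideanSpace ℝ (Fin d), T Kstar (T M w) = w := by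
    intro w
    have : T Kstar (T M w) = T (Kstar * M) w := by
      simp [hT, map_mul]
    rw [this, hKM]
    simp [hT]
  have hMw : ∀ w : EuclideanSpace ℝ (Fin d), T M w = T (Hf xstar) w + β • w := by
    intro w
    simp [hM, hT, map_add]
  -- decomposition
  have hdecomp : x1 - xstar = T Kstar (T (Hf xstar) v - g) + β • T Kstar v - T (K0 - Kstar) g := by
    have h0 : v = T Kstar (T (Hf xstar) v + β • v) := by
      rw [← hMw v, hid v]
    have h1 : T (K0 - Kstar) g = T K0 g - T Kstar g := by simp [hT, map_sub]
    have h2 : x1 - xstar = v - T K0 g := by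
      rw [hup, hv]; simp [mApply, hT]; abel
    rw [h2, h1]
    calc v - T K0 g = T Kstar (T (Hf xstar) v + β • v) - T Kstar g - (T K0 g - T Kstar g) := by
          rw [← h0]; abel
      _ = T Kstar (T (Hf xstar) v - g) + β • T Kstar v - (T K0 g - T Kstar g) := by
          rw [← map_sub, ← map_smul]
          congr 1
          rw [← map_add]
          congr 1
          abel
  -- bounds
  have htaylor : ‖g - mApply (Hf xstar) v‖ ≤ γ / 2 * ‖v‖ ^ 2 := by
    have := taylor_aux (gradient f) Hf hHf γ hhessLip xstar x0
    rw [hcrit] at this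
    simpa [hg, hv] using this
  have hgnorm : ‖g‖ ≤ l * ‖v‖ := by
    have := hgradLip x0 xstar
    rwa [hcrit, sub_zero] at this
  have hη0 : 0 ≤ η := hη ▸ norm_nonneg _
  have b1 : ‖T Kstar (T (Hf xstar) v - g)‖ ≤ η * (γ / 2 * ‖v‖ ^ 2) := by
    calc ‖T Kstar (T (Hf xstar) v - g)‖ ≤ η * ‖T (Hf xstar) v - g‖ := by
          rw [hη]; exact (T Kstar).le_opNorm _
      _ ≤ η * (γ / 2 * ‖v‖ ^ 2) := by
          apply mul_le_mul_of_nonneg_left _ hη0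
          rw [← norm_neg]
          simpa [mApply, hT] using htaylor
  have b2 : ‖β • T Kstar v‖ ≤ β * (η * ‖v‖) := by
    rw [norm_smul, Real.norm_eq_abs, abs_of_pos hβ]
    exact mul_le_mul_of_nonneg_left (hη ▸ (T Kstar).le_opNorm v) hβ.le
  have b3 : ‖T (K0 - Kstar) g‖ ≤ sNorm (K0 - Kstar) * (l * ‖v‖) := by
    calc ‖T (K0 - Kstar) g‖ ≤ sNorm (K0 - Kstar) * ‖g‖ := (T _).le_opNorm g
      _ ≤ sNorm (K0 - Kstar) * (l * ‖v‖) :=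
          mul_le_mul_of_nonneg_left hgnorm (norm_nonneg (T (K0 - Kstar)))
  have htotal : ‖x1 - xstar‖ ≤ η * (γ / 2 * ‖v‖ ^ 2) + β * (η * ‖v‖) + sNorm (K0 - Kstar) * (l * ‖v‖) := by
    rw [hdecomp]
    calc ‖T Kstar (T (Hf xstar) v - g) + β • T Kstar v - T (K0 - Kstar) g‖
        ≤ ‖T Kstar (T (Hf xstar) v - g) + β • T Kstar v‖ + ‖T (K0 - Kstar) g‖ := norm_sub_le _ _
      _ ≤ ‖T Kstar (T (Hf xstar) v - g)‖ + ‖β • T Kstar v‖ + ‖T (K0 - Kstar) g‖ := by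
          gcongr; exact norm_add_le _ _
      _ ≤ _ := by gcongr
  have hvn : 0 ≤ ‖v‖ := norm_nonneg v
  have hmul := mul_le_mul_of_nonneg_right hinit hvn
  calc ‖x1 - xstar‖ ≤ _ := htotal
    _ = (η * γ / 2 * ‖v‖ + l * sNorm (K0 - Kstar) + η * β) * ‖v‖ := by ring
    _ ≤ 1 / (2 * μ) * ‖v‖ := hmul
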